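/- arXiv:2310.09511 — 7 statements merged into one kernel-verified Lean document; each statement's English description precedes it below -/
import Mathlib

section
/- Let A ∈ ℝ^{q×q} be symmetric and suppose there exists α > 0 with zᵀAz ≥ α‖z‖₂² for all z ∈ ℝ^q (so A is positive definite with smallest eigenvalue at least α). Let K := {z ∈ ℝ^q : the first m coordinates of z are ≥ 0}. If z₁ minimizes z ↦ zᵀAz + 2⟨w₁, z⟩ over K and z₂ minimizes z ↦ zᵀAz + 2⟨w₂, z⟩ over K, then ‖z₁ − z₂‖₂ ≤ (1/α)·‖w₁ − w₂‖₂. -/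
open Matrix

/-- The Euclidean (ℓ²) norm of a vector in `Fin n → ℝ`. -/
noncomputable def euclNorm {n : ℕ} (v : Fin n → ℝ) : ℝ :=
  ‖(EuclideanSpace.equiv (Fin n) ℝ).symm v‖

lemma euclNorm_nonneg {n : ℕ} (v : Fin n → ℝ) : 0 ≤ euclNorm v := norm_nonneg _

lemma euclNorm_sub_rev {n : ℕ} (u v : Fin n → ℝ) :
    euclNorm (u - v) = euclNorm (v - u) := by
  unfold euclNorm
  rw [map_sub, map_sub, norm_sub_rev]

lemma dot_le_euclNorm {n : ℕ} (u v : Fin n → ℝ) :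
    u ⬝ᵥ v ≤ euclNorm u * euclNorm v := by
  have h := real_inner_le_norm ((EuclideanSpace.equiv (Fin n) ℝ).symm u)
    ((EuclideanSpace.equiv (Fin n) ℝ).symm v)
  simpa [euclNorm, PiLp.inner_apply, dotProduct, RCLike.inner_apply, mul_comm] using h

lemma aux_nonneg (a b : ℝ) (h : ∀ t : ℝ, 0 < t → t ≤ 1 → 0 ≤ a + t * b) : 0 ≤ a := by
  by_contra hneg
  push_neg at hneg
  set t := min 1 (-a / (2 * (|b| + 1))) with ht
  have hb0 : (0:ℝ) ≤ |b| := abs_nonneg b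
  have ht0 : 0 < t := lt_min one_pos (div_pos (by linarith) (by positivity))
  have ht1 : t ≤ 1 := min_le_left _ _
  have ht2 : t ≤ -a / (2 * (|b| + 1)) := min_le_right _ _
  have h1 := h t ht0 ht1
  have htb : t * b ≤ t * |b| := mul_le_mul_of_nonneg_left (le_abs_self b) ht0.le
  have h2 : t * (|b| + 1) ≤ (-a / (2 * (|b| + 1))) * (|b| + 1) :=
    mul_le_mul_of_nonneg_right ht2 (by positivity)
  have h3 : (-a / (2 * (|b| + 1))) * (|b| + 1) = -a / 2 := by
    field_simp
  nlinarith

lemma vi {n : ℕ} (A : Matrix (Fin n) (Fin n) ℝ) (hA : A.IsSymm) (w z z' : Fin n → ℝ)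
    (h : ∀ t : ℝ, 0 < t → t ≤ 1 →
      z ⬝ᵥ A *ᵥ z + 2 * (w ⬝ᵥ z) ≤
        (z + t • (z' - z)) ⬝ᵥ A *ᵥ (z + t • (z' - z)) + 2 * (w ⬝ᵥ (z + t • (z' - z)))) :
    0 ≤ (z' - z) ⬝ᵥ A *ᵥ z + w ⬝ᵥ (z' - z) := by
  set d := z' - z with hd
  have hsym : ∀ u v : Fin n → ℝ, u ⬝ᵥ A *ᵥ v = v ⬝ᵥ A *ᵥ u := by
    intro u v
    rw [Matrix.dotProduct_mulVec, ← hA.eq, Matrix.vecMul_transpose, dotProduct_comm, hA.eq]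
  have key : ∀ t : ℝ, 0 < t → t ≤ 1 →
      0 ≤ 2 * (d ⬝ᵥ A *ᵥ z + w ⬝ᵥ d) + t * (d ⬝ᵥ A *ᵥ d) := by
    intro t ht0 ht1
    have h1 := h t ht0 ht1
    have hexp : (z + t • d) ⬝ᵥ A *ᵥ (z + t • d) + 2 * (w ⬝ᵥ (z + t • d)) =
        z ⬝ᵥ A *ᵥ z + 2 * (w ⬝ᵥ z) +
          t * (2 * (d ⬝ᵥ A *ᵥ z + w ⬝ᵥ d) + t * (d ⬝ᵥ A *ᵥ d)) := by
      have hzd := hsym z d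
      simp only [Matrix.mulVec_add, Matrix.mulVec_smul, dotProduct_add,
        add_dotProduct, dotProduct_smul, smul_dotProduct, smul_eq_mul]
      ring_nf
      nlinarith [hsym z d]
    rw [hexp] at h1
    have h2 : 0 ≤ t * (2 * (d ⬝ᵥ A *ᵥ z + w ⬝ᵥ d) + t * (d ⬝ᵥ A *ᵥ d)) := by linarith
    nlinarith
  have := aux_nonneg _ _ key
  linarith

theorem stmt2 {m p : ℕ} (A : Matrix (Fin (m + p)) (Fin (m + p)) ℝ) (hA : A.IsSymm)
    (α : ℝ) (hα : 0 < α)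
    (hcoercive : ∀ z : Fin (m + p) → ℝ, α * euclNorm z ^ 2 ≤ z ⬝ᵥ A *ᵥ z)
    (w₁ w₂ z₁ z₂ : Fin (m + p) → ℝ)
    (hz₁K : ∀ i : Fin (m + p), (i : ℕ) < m → 0 ≤ z₁ i)
    (hz₂K : ∀ i : Fin (m + p), (i : ℕ) < m → 0 ≤ z₂ i)
    (hz₁min : ∀ y : Fin (m + p) → ℝ, (∀ i : Fin (m + p), (i : ℕ) < m → 0 ≤ y i) →
      z₁ ⬝ᵥ A *ᵥ z₁ + 2 * (w₁ ⬝ᵥ z₁) ≤ y ⬝ᵥ A *ᵥ y + 2 * (w₁ ⬝ᵥ y))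
    (hz₂min : ∀ y : Fin (m + p) → ℝ, (∀ i : Fin (m + p), (i : ℕ) < m → 0 ≤ y i) →
      z₂ ⬝ᵥ A *ᵥ z₂ + 2 * (w₂ ⬝ᵥ z₂) ≤ y ⬝ᵥ A *ᵥ y + 2 * (w₂ ⬝ᵥ y)) :
    euclNorm (z₁ - z₂) ≤ (1 / α) * euclNorm (w₁ - w₂) := by
  -- membership of segment points in K
  have hmem : ∀ (a b : Fin (m+p) → ℝ), (∀ i : Fin (m+p), (i:ℕ) < m → 0 ≤ a i) →
      (∀ i : Fin (m+p), (i:ℕ) < m → 0 ≤ b i) → ∀ t : ℝ, 0 < t → t ≤ 1 →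
      ∀ i : Fin (m+p), (i:ℕ) < m → 0 ≤ (a + t • (b - a)) i := by
    intro a b ha hb t ht0 ht1 i hi
    have h1 := ha i hi
    have h2 := hb i hi
    simp only [Pi.add_apply, Pi.smul_apply, Pi.sub_apply, smul_eq_mul]
    nlinarith
  have hvi₁ : 0 ≤ (z₂ - z₁) ⬝ᵥ A *ᵥ z₁ + w₁ ⬝ᵥ (z₂ - z₁) := by
    apply vi A hA
    intro t ht0 ht1
    exact hz₁min _ (hmem z₁ z₂ hz₁K hz₂K t ht0 ht1)
  have hvi₂ : 0 ≤ (z₁ - z₂) ⬝ᵥ A *ᵥ z₂ + w₂ ⬝ᵥ (z₁ - z₂) := by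
    apply vi A hA
    intro t ht0 ht1
    exact hz₂min _ (hmem z₂ z₁ hz₂K hz₁K t ht0 ht1)
  set d := z₁ - z₂ with hd
  have hdd : d ⬝ᵥ A *ᵥ d ≤ (w₂ - w₁) ⬝ᵥ d := by
    have e1 : (z₂ - z₁) ⬝ᵥ A *ᵥ z₁ = -(d ⬝ᵥ A *ᵥ z₁) := by
      rw [hd]
      simp [sub_dotProduct, neg_dotProduct]
    have e2 : d ⬝ᵥ A *ᵥ z₂ - d ⬝ᵥ A *ᵥ z₁ = -(d ⬝ᵥ A *ᵥ d) := by
      rw [hd]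
      simp [Matrix.mulVec_sub, dotProduct_sub]
    have e3 : w₁ ⬝ᵥ (z₂ - z₁) = -(w₁ ⬝ᵥ d) := by
      rw [hd]; simp [dotProduct_sub]
    have e4 : w₂ ⬝ᵥ (z₁ - z₂) = w₂ ⬝ᵥ d := by rw [hd]
    have e5 : (w₂ - w₁) ⬝ᵥ d = w₂ ⬝ᵥ d - w₁ ⬝ᵥ d := by
      simp [sub_dotProduct]
    rw [e1, e3] at hvi₁
    rw [e4] at hvi₂
    linarith [hvi₁, hvi₂, e2.symm, e5.symm,
      (show d ⬝ᵥ A *ᵥ z₂ - d ⬝ᵥ A *ᵥ z₁ = -(d ⬝ᵥ A *ᵥ d) from e2)]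
  have hco := hcoercive d
  have hcs : (w₂ - w₁) ⬝ᵥ d ≤ euclNorm (w₂ - w₁) * euclNorm d := dot_le_euclNorm _ _
  have hnw : euclNorm (w₂ - w₁) = euclNorm (w₁ - w₂) := euclNorm_sub_rev _ _
  have hnd0 : 0 ≤ euclNorm d := euclNorm_nonneg d
  have hnw0 : 0 ≤ euclNorm (w₁ - w₂) := euclNorm_nonneg _
  have hkey : α * euclNorm d ^ 2 ≤ euclNorm (w₁ - w₂) * euclNorm d := by
    rw [← hnw]; nlinarith
  rcases eq_or_lt_of_le hnd0 with h0 | h0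
  · rw [hd] at h0
    rw [← h0]
    positivity
  · rw [hd] at *
    rw [div_mul_eq_mul_div, le_div_iff₀ hα]
    nlinarith [hkey]
end

section
/- Let ∇h ∈ ℝ^{n×m} and ∇g ∈ ℝ^{n×p} be real matrices such that the columns of the concatenated matrix [∇h, ∇g] are linearly independent, let H ∈ ℝ^{m×m} be a diagonal matrix, and define R := I − ∇g(∇gᵀ∇g)⁻¹∇gᵀ. Then both ∇hᵀR∇h and P := ∇hᵀR∇h + H² are symmetric positive definite matrices in ℝ^{m×m}; in particular both are invertible. -/
open Matrix

private lemma gram_posDef {n m : ℕ} (B : Matrix (Fin n) (Fin m) ℝ)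
    (hB : ∀ v : Fin m → ℝ, B *ᵥ v = 0 → v = 0) : (Bᵀ * B).PosDef := by
  refine posDef_iff_dotProduct_mulVec.mpr ⟨?_, fun x hx => ?_⟩
  · have := isHermitian_conjTranspose_mul_self B
    rwa [conjTranspose_eq_transpose_of_trivial] at this
  · have hform : x ⬝ᵥ ((Bᵀ * B) *ᵥ x) = (B *ᵥ x) ⬝ᵥ (B *ᵥ x) := by
      rw [← mulVec_mulVec, dotProduct_mulVec, vecMul_transpose]
    have hxB : B *ᵥ x ≠ 0 := fun h => hx (hB x h)
    have : 0 < (B *ᵥ x) ⬝ᵥ (B *ᵥ x) := by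
      have := dotProduct_star_self_pos_iff (v := B *ᵥ x) |>.mpr hxB
      simpa using this
    simpa [hform] using this

theorem stmt7 {n m p : ℕ} (gradh : Matrix (Fin n) (Fin m) ℝ)
    (gradg : Matrix (Fin n) (Fin p) ℝ)
    (H : Matrix (Fin m) (Fin m) ℝ) (hH : H.IsDiag)
    (hli : ∀ (w₁ : Fin m → ℝ) (w₂ : Fin p → ℝ),
      gradh *ᵥ w₁ + gradg *ᵥ w₂ = 0 → w₁ = 0 ∧ w₂ = 0)
    (R : Matrix (Fin n) (Fin n) ℝ)
    (hR : R = 1 - gradg * (gradgᵀ * gradg)⁻¹ * gradgᵀ) :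
    (gradhᵀ * R * gradh).PosDef ∧ (gradhᵀ * R * gradh + H * H).PosDef ∧
      IsUnit (gradhᵀ * R * gradh) ∧ IsUnit (gradhᵀ * R * gradh + H * H) := by
  set A := gradg with hA
  set G := gradgᵀ * gradg with hG
  -- injectivity of gradg
  have hginj : ∀ v : Fin p → ℝ, A *ᵥ v = 0 → v = 0 := by
    intro v hv
    exact (hli 0 v (by simpa using hv)).2
  have hGpd : G.PosDef := gram_posDef gradg hginj
  have hGunit : IsUnit G.det := (isUnit_iff_isUnit_det G).mp hGpd.isUnit
  have hGinvG : G⁻¹ * G = 1 := nonsing_inv_mul G hGunit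
  have hGsymm : Gᵀ = G := by
    rw [hG, transpose_mul, transpose_transpose]
  have hGinvsymm : (G⁻¹)ᵀ = G⁻¹ := by
    rw [transpose_nonsing_inv, hGsymm]
  -- symmetry of R
  have hRsymm : Rᵀ = R := by
    rw [hR]
    simp [transpose_sub, transpose_mul, transpose_transpose, hGinvsymm, Matrix.mul_assoc]
  -- idempotency: R * R = R
  have hRR : R * R = R := by
    rw [hR]
    have hS : (A * G⁻¹ * Aᵀ) * (A * G⁻¹ * Aᵀ) = A * G⁻¹ * Aᵀ := by
      calc (A * G⁻¹ * Aᵀ) * (A * G⁻¹ * Aᵀ)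
          = A * (G⁻¹ * (Aᵀ * A)) * (G⁻¹ * Aᵀ) := by
            simp only [Matrix.mul_assoc]
        _ = A * (G⁻¹ * G) * (G⁻¹ * Aᵀ) := by rw [← hG]
        _ = A * G⁻¹ * Aᵀ := by rw [hGinvG, Matrix.mul_one, Matrix.mul_assoc]
    simp only [Matrix.sub_mul, Matrix.mul_sub, Matrix.one_mul, Matrix.mul_one, hS]
    abel
  -- key factorization: gradhᵀ * R * gradh = (R * gradh)ᵀ * (R * gradh)
  have hfact : gradhᵀ * R * gradh = (R * gradh)ᵀ * (R * gradh) := by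
    have h1 : (R * gradh)ᵀ * (R * gradh) = gradhᵀ * (R * R) * gradh := by
      rw [transpose_mul, hRsymm]
      simp only [Matrix.mul_assoc]
    rw [h1, hRR]
  -- injectivity of R * gradh
  have hinj : ∀ v : Fin m → ℝ, (R * gradh) *ᵥ v = 0 → v = 0 := by
    intro v hv
    rw [hR, Matrix.sub_mul, Matrix.one_mul, sub_mulVec, sub_eq_zero] at hv
    have hv2 : gradh *ᵥ v = A *ᵥ ((G⁻¹ * Aᵀ) *ᵥ (gradh *ᵥ v)) := by
      conv_lhs => rw [hv]
      simp only [mulVec_mulVec, Matrix.mul_assoc]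
    have hv' : gradh *ᵥ v + A *ᵥ (-((G⁻¹ * Aᵀ) *ᵥ (gradh *ᵥ v))) = 0 := by
      rw [mulVec_neg, ← sub_eq_add_neg, sub_eq_zero]
      exact hv2
    exact (hli v _ hv').1
  have hMpd : (gradhᵀ * R * gradh).PosDef := by
    rw [hfact]
    exact gram_posDef (R * gradh) hinj
  -- H * H is positive semidefinite
  have hHsymm : Hᵀ = H := hH.isSymm
  have hH2 : (H * H).PosSemidef := by
    have := posSemidef_conjTranspose_mul_self H
    rwa [conjTranspose_eq_transpose_of_trivial, hHsymm] at this
  have hsum : (gradhᵀ * R * gradh + H * H).PosDef := hMpd.add_posSemidef hH2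
  exact ⟨hMpd, hsum, hMpd.isUnit, hsum.isUnit⟩
end

section
/- Let ∇h ∈ ℝ^{n×m} and ∇g ∈ ℝ^{n×p} be real matrices such that the columns of the concatenated matrix [∇h, ∇g] are linearly independent, let H ∈ ℝ^{m×m} be a diagonal matrix, and define R := I − ∇g(∇gᵀ∇g)⁻¹∇gᵀ and P := ∇hᵀR∇h + H². Then the matrix Q := R − R∇h P⁻¹ ∇hᵀ R ∈ ℝ^{n×n} is symmetric positive semidefinite. -/
open Matrix

lemma aux_quad {l m : Type*} [Fintype l] [Fintype m] (K : Matrix l m ℝ) (x : m → ℝ) :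
    x ⬝ᵥ ((Kᵀ * K) *ᵥ x) = (K *ᵥ x) ⬝ᵥ (K *ᵥ x) := by
  rw [← mulVec_mulVec, dotProduct_mulVec, vecMul_transpose]

lemma aux_posDef {l m : Type*} [Fintype l] [Fintype m] (K : Matrix l m ℝ)
    (hK : ∀ x, K *ᵥ x = 0 → x = 0) : (Kᵀ * K).PosDef := by
  refine posDef_iff_dotProduct_mulVec.mpr ⟨?_, ?_⟩
  · show (Kᵀ * K)ᴴ = Kᵀ * K
    rw [conjTranspose_eq_transpose_of_trivial, transpose_mul, transpose_transpose]
  · intro x hx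
    rw [star_trivial, aux_quad]
    have h1 : K *ᵥ x ≠ 0 := fun h => hx (hK x h)
    have h2 : (K *ᵥ x) ⬝ᵥ (K *ᵥ x) ≠ 0 := fun h => h1 (dotProduct_self_eq_zero.mp h)
    have h3 : 0 ≤ (K *ᵥ x) ⬝ᵥ (K *ᵥ x) := Finset.sum_nonneg fun i _ => mul_self_nonneg _
    exact lt_of_le_of_ne h3 (Ne.symm h2)

lemma aux_psd {l m : Type*} [Fintype l] [Fintype m] (K : Matrix l m ℝ) :
    (Kᵀ * K).PosSemidef := by
  have := posSemidef_conjTranspose_mul_self K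
  rwa [conjTranspose_eq_transpose_of_trivial] at this

theorem stmt8 {n m p : ℕ} (gradh : Matrix (Fin n) (Fin m) ℝ)
    (gradg : Matrix (Fin n) (Fin p) ℝ)
    (H : Matrix (Fin m) (Fin m) ℝ) (hH : H.IsDiag)
    (hli : ∀ (w₁ : Fin m → ℝ) (w₂ : Fin p → ℝ),
      gradh *ᵥ w₁ + gradg *ᵥ w₂ = 0 → w₁ = 0 ∧ w₂ = 0)
    (R : Matrix (Fin n) (Fin n) ℝ)
    (hR : R = 1 - gradg * (gradgᵀ * gradg)⁻¹ * gradgᵀ)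
    (P : Matrix (Fin m) (Fin m) ℝ)
    (hP : P = gradhᵀ * R * gradh + H * H)
    (Q : Matrix (Fin n) (Fin n) ℝ)
    (hQ : Q = R - R * gradh * P⁻¹ * gradhᵀ * R) :
    Q.PosSemidef := by
  -- gradg has linearly independent columns
  have hGinj : ∀ x : Fin p → ℝ, gradg *ᵥ x = 0 → x = 0 := fun x hx =>
    (hli 0 x (by simpa using hx)).2
  have hA : (gradgᵀ * gradg).PosDef := aux_posDef gradg hGinj
  have hAdet : IsUnit (gradgᵀ * gradg).det := isUnit_iff_ne_zero.2 hA.det_pos.ne'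
  have hAinv : (gradgᵀ * gradg)⁻¹ * (gradgᵀ * gradg) = 1 := nonsing_inv_mul _ hAdet
  have hAinv' : (gradgᵀ * gradg) * (gradgᵀ * gradg)⁻¹ = 1 := mul_nonsing_inv _ hAdet
  have hAsym : (gradgᵀ * gradg)ᵀ = gradgᵀ * gradg := by
    rw [transpose_mul, transpose_transpose]
  have hAisym : ((gradgᵀ * gradg)⁻¹)ᵀ = (gradgᵀ * gradg)⁻¹ := by
    rw [transpose_nonsing_inv, hAsym]
  -- R is symmetric and idempotent
  have hRsym : Rᵀ = R := by
    rw [hR]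
    simp [transpose_sub, transpose_mul, transpose_transpose, hAisym, Matrix.mul_assoc]
  have hRR : R * R = R := by
    rw [hR]
    have key : gradg * (gradgᵀ * gradg)⁻¹ * gradgᵀ * (gradg * (gradgᵀ * gradg)⁻¹ * gradgᵀ)
        = gradg * (gradgᵀ * gradg)⁻¹ * gradgᵀ := by
      rw [← Matrix.mul_assoc, ← Matrix.mul_assoc,
        Matrix.mul_assoc (gradg * (gradgᵀ * gradg)⁻¹) gradgᵀ gradg,
        Matrix.mul_assoc gradg ((gradgᵀ * gradg)⁻¹) (gradgᵀ * gradg), hAinv, Matrix.mul_one]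
    have expand : (1 - gradg * (gradgᵀ * gradg)⁻¹ * gradgᵀ) *
        (1 - gradg * (gradgᵀ * gradg)⁻¹ * gradgᵀ)
        = 1 - gradg * (gradgᵀ * gradg)⁻¹ * gradgᵀ - gradg * (gradgᵀ * gradg)⁻¹ * gradgᵀ
          + gradg * (gradgᵀ * gradg)⁻¹ * gradgᵀ * (gradg * (gradgᵀ * gradg)⁻¹ * gradgᵀ) := by
      noncomm_ring
    rw [expand, key]
    abel
  -- H is symmetric
  have hHsym : Hᵀ = H := by
    ext i j
    by_cases h : i = j
    · subst h; rfl
    · rw [transpose_apply, hH h, hH (Ne.symm h)]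
  -- P is positive definite
  have hPinj : ∀ x : Fin m → ℝ, (fromRows (R * gradh) H) *ᵥ x = 0 → x = 0 := by
    intro x hx
    rw [fromRows_mulVec] at hx
    have h1 : (R * gradh) *ᵥ x = 0 := funext fun i => congrFun hx (Sum.inl i)
    have h2 : R *ᵥ (gradh *ᵥ x) = 0 := by rwa [mulVec_mulVec]
    rw [hR, sub_mulVec, one_mulVec, sub_eq_zero] at h2
    refine (hli x (-(((gradgᵀ * gradg)⁻¹ * gradgᵀ) *ᵥ (gradh *ᵥ x))) ?_).1
    rw [mulVec_neg, add_neg_eq_zero, mulVec_mulVec, ← Matrix.mul_assoc]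
    exact h2
  have hPeq : P = (fromRows (R * gradh) H)ᵀ * fromRows (R * gradh) H := by
    rw [transpose_fromRows, fromCols_mul_fromRows, hP, transpose_mul, hRsym, hHsym]
    congr 1
    rw [Matrix.mul_assoc gradhᵀ R (R * gradh), ← Matrix.mul_assoc R R gradh, hRR,
      Matrix.mul_assoc]
  have hPD : P.PosDef := hPeq ▸ aux_posDef _ hPinj
  haveI : Invertible P := P.invertibleOfIsUnitDet (isUnit_iff_ne_zero.2 hPD.det_pos.ne')
  -- the block matrix is PSD
  have hblock : (fromCols R (R * gradh))ᵀ * fromCols R (R * gradh)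
      + (fromCols (0 : Matrix (Fin m) (Fin n) ℝ) H)ᵀ * fromCols 0 H
      = fromBlocks R (R * gradh) (gradhᵀ * R) P := by
    rw [transpose_fromCols, transpose_fromCols, fromRows_mul_fromCols,
      fromRows_mul_fromCols, fromBlocks_add, fromBlocks_inj]
    refine ⟨?_, ?_, ?_, ?_⟩
    · rw [transpose_zero, Matrix.zero_mul, add_zero, hRsym, hRR]
    · rw [transpose_zero, Matrix.zero_mul, add_zero, hRsym, ← Matrix.mul_assoc, hRR]
    · rw [Matrix.mul_zero, add_zero, transpose_mul, hRsym, Matrix.mul_assoc, hRR]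
    · rw [hP, transpose_mul, hRsym, hHsym]
      congr 1
      rw [Matrix.mul_assoc gradhᵀ R (R * gradh), ← Matrix.mul_assoc R R gradh, hRR,
        ← Matrix.mul_assoc]
  have hpsd : (fromBlocks R (R * gradh) (gradhᵀ * R) P).PosSemidef := by
    rw [← hblock]
    exact (aux_psd _).add (aux_psd _)
  have hBH : (R * gradh)ᴴ = gradhᵀ * R := by
    rw [conjTranspose_eq_transpose_of_trivial, transpose_mul, hRsym]
  have := (PosDef.fromBlocks₂₂ R (R * gradh) hPD).mp (by rwa [hBH])
  rw [hBH] at this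
  have hQeq : Q = R - R * gradh * P⁻¹ * (gradhᵀ * R) := by
    rw [hQ, Matrix.mul_assoc (R * gradh * P⁻¹) gradhᵀ R]
  rwa [hQeq]
end

section
/- Let ∇h ∈ ℝ^{n×m} and ∇g ∈ ℝ^{n×p} be real matrices such that the columns of the concatenated matrix [∇h, ∇g] are linearly independent, let H ∈ ℝ^{m×m} be a diagonal matrix, and define R := I − ∇g(∇gᵀ∇g)⁻¹∇gᵀ, P := ∇hᵀR∇h + H², Q := R − R∇h P⁻¹ ∇hᵀ R, and Q₁ := R − R∇h(∇hᵀR∇h)⁻¹∇hᵀR. Then Q − Q₁ is symmetric positive semidefinite; i.e., xᵀQx ≥ xᵀQ₁x for every x ∈ ℝ^n. -/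
open Matrix

lemma posDef_tmul {k l : ℕ} {A : Matrix (Fin k) (Fin l) ℝ}
    (h : ∀ v, A *ᵥ v = 0 → v = 0) : (Aᵀ * A).PosDef := by
  refine Matrix.PosDef.of_dotProduct_mulVec_pos ?_ ?_
  · rw [Matrix.IsHermitian, conjTranspose_eq_transpose_of_trivial, transpose_mul,
      transpose_transpose]
  · intro x hx
    have hAx : A *ᵥ x ≠ 0 := fun hc => hx (h x hc)
    have : x ⬝ᵥ (Aᵀ * A) *ᵥ x = (A *ᵥ x) ⬝ᵥ (A *ᵥ x) := by
      rw [← mulVec_mulVec, Matrix.dotProduct_mulVec, vecMul_transpose]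
    simp only [star_trivial, this]
    have := (dotProduct_self_eq_zero (v := A *ᵥ x)).not.mpr hAx
    have h2 : 0 ≤ (A *ᵥ x) ⬝ᵥ (A *ᵥ x) := by
      exact Finset.sum_nonneg fun i _ => mul_self_nonneg ((A *ᵥ x) i)
    exact lt_of_le_of_ne h2 (Ne.symm this)

theorem stmt10 {n m p : ℕ} (gradh : Matrix (Fin n) (Fin m) ℝ)
    (gradg : Matrix (Fin n) (Fin p) ℝ)
    (H : Matrix (Fin m) (Fin m) ℝ) (hH : H.IsDiag)
    (hli : ∀ (w₁ : Fin m → ℝ) (w₂ : Fin p → ℝ),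
      gradh *ᵥ w₁ + gradg *ᵥ w₂ = 0 → w₁ = 0 ∧ w₂ = 0)
    (R : Matrix (Fin n) (Fin n) ℝ)
    (hR : R = 1 - gradg * (gradgᵀ * gradg)⁻¹ * gradgᵀ)
    (P : Matrix (Fin m) (Fin m) ℝ)
    (hP : P = gradhᵀ * R * gradh + H * H)
    (Q : Matrix (Fin n) (Fin n) ℝ)
    (hQ : Q = R - R * gradh * P⁻¹ * gradhᵀ * R)
    (Q₁ : Matrix (Fin n) (Fin n) ℝ)
    (hQ₁ : Q₁ = R - R * gradh * (gradhᵀ * R * gradh)⁻¹ * gradhᵀ * R) :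
    (Q - Q₁).PosSemidef ∧ ∀ x : Fin n → ℝ, x ⬝ᵥ Q₁ *ᵥ x ≤ x ⬝ᵥ Q *ᵥ x := by
  -- invertibility of gradgᵀ * gradg
  have hginj : ∀ w₂ : Fin p → ℝ, gradg *ᵥ w₂ = 0 → w₂ = 0 := fun w₂ hw =>
    (hli 0 w₂ (by simp [hw])).2
  have hGG : (gradgᵀ * gradg).PosDef := posDef_tmul hginj
  have hGGd : IsUnit (gradgᵀ * gradg).det :=
    (Matrix.isUnit_iff_isUnit_det _).mp hGG.isUnit
  set K := (gradgᵀ * gradg)⁻¹ with hK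
  have hKG : K * (gradgᵀ * gradg) = 1 := Matrix.nonsing_inv_mul _ hGGd
  -- R symmetric
  have hKsymm : Kᵀ = K := by
    rw [hK, Matrix.transpose_nonsing_inv, transpose_mul, transpose_transpose]
  have hRsymm : Rᵀ = R := by
    rw [hR]
    simp only [transpose_sub, transpose_one, transpose_mul, transpose_transpose, hKsymm,
      Matrix.mul_assoc]
  -- R idempotent
  have hRR : R * R = R := by
    have hE : (gradg * K * gradgᵀ) * (gradg * K * gradgᵀ) = gradg * K * gradgᵀ := by
      calc (gradg * K * gradgᵀ) * (gradg * K * gradgᵀ)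
          = gradg * (K * (gradgᵀ * gradg)) * (K * gradgᵀ) := by
            simp only [Matrix.mul_assoc]
        _ = gradg * K * gradgᵀ := by rw [hKG]; simp [Matrix.mul_assoc]
    rw [hR, sub_mul, mul_sub, mul_sub, hE]
    simp only [one_mul, mul_one]
    abel
  -- B := R * gradh has trivial kernel
  set B := R * gradh with hB
  have hBinj : ∀ w : Fin m → ℝ, B *ᵥ w = 0 → w = 0 := by
    intro w hw
    have hw' : R *ᵥ (gradh *ᵥ w) = 0 := by rw [mulVec_mulVec]; exact hw
    have : gradh *ᵥ w + gradg *ᵥ (-((K * gradgᵀ) *ᵥ (gradh *ᵥ w))) = 0 := by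
      rw [hR] at hw'
      rw [mulVec_neg, mulVec_mulVec, ← sub_eq_add_neg]
      rw [sub_mulVec, one_mulVec, Matrix.mul_assoc] at hw'
      exact hw'
    exact (hli w _ this).1
  -- A := gradhᵀ * R * gradh is positive definite
  have hABB : gradhᵀ * R * gradh = Bᵀ * B := by
    rw [hB, transpose_mul, hRsymm, Matrix.mul_assoc, Matrix.mul_assoc, ← Matrix.mul_assoc R,
      hRR]
  set A := gradhᵀ * R * gradh with hA
  have hApd : A.PosDef := hABB ▸ posDef_tmul hBinj
  -- S := H * H is positive semidefinite
  have hHsymm : Hᵀ = H := hH.isSymm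
  have hSpsd : (H * H).PosSemidef := by
    have := posSemidef_conjTranspose_mul_self H
    rwa [conjTranspose_eq_transpose_of_trivial, hHsymm] at this
  set S := H * H with hS
  -- P positive definite
  have hPpd : P.PosDef := hP ▸ hApd.add_posSemidef hSpsd
  have hAd : IsUnit A.det := (Matrix.isUnit_iff_isUnit_det _).mp hApd.isUnit
  have hPd : IsUnit P.det := (Matrix.isUnit_iff_isUnit_det _).mp hPpd.isUnit
  have hAAi : A * A⁻¹ = 1 := Matrix.mul_nonsing_inv _ hAd
  have hAiA : A⁻¹ * A = 1 := Matrix.nonsing_inv_mul _ hAd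
  have hPPi : P * P⁻¹ = 1 := Matrix.mul_nonsing_inv _ hPd
  have hPiP : P⁻¹ * P = 1 := Matrix.nonsing_inv_mul _ hPd
  -- key identity: A⁻¹ - P⁻¹ = P⁻¹ * (S + S * A⁻¹ * S) * P⁻¹
  have hPDP : P * (A⁻¹ - P⁻¹) * P = S + S * A⁻¹ * S := by
    have h1 : P * (A⁻¹ - P⁻¹) * P = P * A⁻¹ * P - P := by
      rw [mul_sub, sub_mul, hPPi, one_mul]
    rw [h1, hP]
    calc (A + S) * A⁻¹ * (A + S) - (A + S)
        = (1 + S * A⁻¹) * (A + S) - (A + S) := by rw [add_mul, hAAi]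
      _ = S + S * A⁻¹ * S := by
          rw [add_mul, one_mul, mul_add (S * A⁻¹), Matrix.mul_assoc S A⁻¹ A, hAiA, mul_one]
          abel
  have hD : A⁻¹ - P⁻¹ = P⁻¹ * (S + S * A⁻¹ * S) * P⁻¹ := by
    rw [← hPDP]
    symm
    calc P⁻¹ * (P * (A⁻¹ - P⁻¹) * P) * P⁻¹
        = (P⁻¹ * P) * (A⁻¹ - P⁻¹) * (P * P⁻¹) := by simp only [Matrix.mul_assoc]
      _ = A⁻¹ - P⁻¹ := by rw [hPiP, hPPi, one_mul, mul_one]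
  -- D := A⁻¹ - P⁻¹ is positive semidefinite
  have hMidpsd : (S + S * A⁻¹ * S).PosSemidef := by
    have hSsymm : Sᵀ = S := by rw [hS, transpose_mul, hHsymm]
    have h2 : (Sᴴ * A⁻¹ * S).PosSemidef :=
      (hApd.inv.posSemidef).conjTranspose_mul_mul_same S
    rw [conjTranspose_eq_transpose_of_trivial, hSsymm] at h2
    exact hSpsd.add h2
  have hDpsd : (A⁻¹ - P⁻¹).PosSemidef := by
    rw [hD]
    have h3 : ((P⁻¹)ᴴ * (S + S * A⁻¹ * S) * P⁻¹).PosSemidef :=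
      hMidpsd.conjTranspose_mul_mul_same P⁻¹
    have hPit : (P⁻¹)ᵀ = P⁻¹ := by
      have := hPpd.isHermitian.inv
      rwa [Matrix.IsHermitian, conjTranspose_eq_transpose_of_trivial] at this
    rwa [conjTranspose_eq_transpose_of_trivial, hPit] at h3
  -- Q - Q₁ = B * (A⁻¹ - P⁻¹) * Bᵀ
  have hQQ : Q - Q₁ = B * (A⁻¹ - P⁻¹) * Bᵀ := by
    have hBT : Bᵀ = gradhᵀ * R := by rw [hB, transpose_mul, hRsymm]
    rw [hQ, hQ₁, hBT, Matrix.mul_sub, Matrix.sub_mul]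
    simp only [Matrix.mul_assoc]
    abel
  have hfinal : (Q - Q₁).PosSemidef := by
    rw [hQQ]
    have := hDpsd.mul_mul_conjTranspose_same B
    rwa [conjTranspose_eq_transpose_of_trivial] at this
  refine ⟨hfinal, fun x => ?_⟩
  have h0 := hfinal.dotProduct_mulVec_nonneg x
  rw [star_trivial, sub_mulVec, dotProduct_sub] at h0
  linarith
end

section
/- Let ∇h ∈ ℝ^{n×m} and ∇g ∈ ℝ^{n×p} be real matrices such that the columns of the concatenated matrix [∇h, ∇g] are linearly independent, let H ∈ ℝ^{m×m} be a diagonal matrix, and define R := I − ∇g(∇gᵀ∇g)⁻¹∇gᵀ, P := ∇hᵀR∇h + H², and Q := R − R∇h P⁻¹ ∇hᵀ R. Then for every F ∈ ℝ^n, λ ∈ ℝ^m, and ν ∈ ℝ^p, with k := (∇gᵀ∇g)⁻¹∇gᵀ(F + ∇hλ), the following identity holds: ‖F + ∇hλ + ∇gν‖₂² + ‖Hλ‖₂² = (ν + k)ᵀ(∇gᵀ∇g)(ν + k) + (λ + P⁻¹∇hᵀRF)ᵀ P (λ + P⁻¹∇hᵀRF) + FᵀQF. -/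
open Matrix

private lemma euclNorm_sq {n : ℕ} (v : Fin n → ℝ) : euclNorm v ^ 2 = v ⬝ᵥ v := by
  have h : euclNorm v = Real.sqrt (∑ i, v i ^ 2) := by
    rw [euclNorm, EuclideanSpace.norm_eq]
    congr 1
    refine Finset.sum_congr rfl fun i _ => ?_
    simp [Real.norm_eq_abs, sq_abs]
  rw [h, Real.sq_sqrt (Finset.sum_nonneg fun i _ => sq_nonneg _)]
  simp [dotProduct, sq]

private lemma dotTrans {a b : ℕ} (M : Matrix (Fin a) (Fin b) ℝ) (x : Fin b → ℝ)
    (y : Fin a → ℝ) : x ⬝ᵥ Mᵀ *ᵥ y = (M *ᵥ x) ⬝ᵥ y := by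
  rw [dotProduct_mulVec, vecMul_transpose]

private lemma dotSymmBilin {a : ℕ} {M : Matrix (Fin a) (Fin a) ℝ} (hM : Mᵀ = M)
    (x y : Fin a → ℝ) : x ⬝ᵥ M *ᵥ y = y ⬝ᵥ M *ᵥ x := by
  rw [← hM, dotTrans, dotProduct_comm, hM]

private lemma dot_self_nonneg {a : ℕ} (v : Fin a → ℝ) : 0 ≤ v ⬝ᵥ v :=
  Finset.sum_nonneg fun i _ => mul_self_nonneg _

private lemma expand_sq {a : ℕ} (x y : Fin a → ℝ) :
    (x + y) ⬝ᵥ (x + y) = x ⬝ᵥ x + 2 * (y ⬝ᵥ x) + y ⬝ᵥ y := by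
  rw [dotProduct_add, add_dotProduct, add_dotProduct, dotProduct_comm x y]
  ring

theorem stmt12 {n m p : ℕ} (gradh : Matrix (Fin n) (Fin m) ℝ)
    (gradg : Matrix (Fin n) (Fin p) ℝ)
    (H : Matrix (Fin m) (Fin m) ℝ) (hH : H.IsDiag)
    (hli : ∀ (w₁ : Fin m → ℝ) (w₂ : Fin p → ℝ),
      gradh *ᵥ w₁ + gradg *ᵥ w₂ = 0 → w₁ = 0 ∧ w₂ = 0)
    (R : Matrix (Fin n) (Fin n) ℝ)
    (hR : R = 1 - gradg * (gradgᵀ * gradg)⁻¹ * gradgᵀ)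
    (P : Matrix (Fin m) (Fin m) ℝ)
    (hP : P = gradhᵀ * R * gradh + H * H)
    (Q : Matrix (Fin n) (Fin n) ℝ)
    (hQ : Q = R - R * gradh * P⁻¹ * gradhᵀ * R)
    (F : Fin n → ℝ) (lam : Fin m → ℝ) (ν : Fin p → ℝ)
    (k : Fin p → ℝ) (hk : k = (gradgᵀ * gradg)⁻¹ *ᵥ (gradgᵀ *ᵥ (F + gradh *ᵥ lam))) :
    euclNorm (F + gradh *ᵥ lam + gradg *ᵥ ν) ^ 2 + euclNorm (H *ᵥ lam) ^ 2 =
      (ν + k) ⬝ᵥ (gradgᵀ * gradg) *ᵥ (ν + k)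
        + (lam + P⁻¹ *ᵥ (gradhᵀ *ᵥ (R *ᵥ F))) ⬝ᵥ P *ᵥ (lam + P⁻¹ *ᵥ (gradhᵀ *ᵥ (R *ᵥ F)))
        + F ⬝ᵥ Q *ᵥ F := by
  -- invertibility of gradgᵀ * gradg
  have hGker : ∀ x : Fin p → ℝ, (gradgᵀ * gradg) *ᵥ x = 0 → x = 0 := by
    intro x hx
    have h1 : (gradg *ᵥ x) ⬝ᵥ (gradg *ᵥ x) = 0 := by
      rw [← dotTrans, mulVec_mulVec, hx, dotProduct_zero]
    exact (hli 0 x (by simpa using dotProduct_self_eq_zero.mp h1)).2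
  have hGu : IsUnit (gradgᵀ * gradg) := by
    rw [← Matrix.mulVec_injective_iff_isUnit]
    intro x y hxy
    have h0 : (gradgᵀ * gradg) *ᵥ (x - y) = 0 := by rw [mulVec_sub, hxy, sub_self]
    exact sub_eq_zero.mp (hGker _ h0)
  have hGdet : IsUnit (gradgᵀ * gradg).det := (Matrix.isUnit_iff_isUnit_det _).mp hGu
  have hGi1 : (gradgᵀ * gradg) * (gradgᵀ * gradg)⁻¹ = 1 := Matrix.mul_nonsing_inv _ hGdet
  have hGi2 : (gradgᵀ * gradg)⁻¹ * (gradgᵀ * gradg) = 1 := Matrix.nonsing_inv_mul _ hGdet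
  have hGsym : (gradgᵀ * gradg)ᵀ = gradgᵀ * gradg := by
    rw [transpose_mul, transpose_transpose]
  have hGisym : ((gradgᵀ * gradg)⁻¹)ᵀ = (gradgᵀ * gradg)⁻¹ := by
    rw [Matrix.transpose_nonsing_inv, hGsym]
  have hRsym : Rᵀ = R := by
    rw [hR]
    simp [transpose_sub, transpose_mul, transpose_transpose, hGisym, Matrix.mul_assoc]
  have hRB : R * gradg = 0 := by
    have h2 : gradg * (gradgᵀ * gradg)⁻¹ * gradgᵀ * gradg = gradg := by
      rw [Matrix.mul_assoc (gradg * (gradgᵀ * gradg)⁻¹), Matrix.mul_assoc gradg, hGi2,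
        Matrix.mul_one]
    rw [hR, Matrix.sub_mul, Matrix.one_mul, h2, sub_self]
  have hRR : R * R = R := by
    nth_rewrite 2 [hR]
    rw [Matrix.mul_sub, Matrix.mul_one, ← Matrix.mul_assoc, ← Matrix.mul_assoc, hRB,
      Matrix.zero_mul, Matrix.zero_mul, sub_zero]
  have hHsym : Hᵀ = H := hH.isSymm
  have hPsym : Pᵀ = P := by
    rw [hP]
    simp [transpose_add, transpose_mul, transpose_transpose, hRsym, hHsym, Matrix.mul_assoc]
  -- quadratic form facts
  have hRself : ∀ w : Fin n → ℝ, w ⬝ᵥ R *ᵥ w = (R *ᵥ w) ⬝ᵥ (R *ᵥ w) := by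
    intro w
    calc w ⬝ᵥ R *ᵥ w = w ⬝ᵥ (R * R) *ᵥ w := by rw [hRR]
      _ = w ⬝ᵥ Rᵀ *ᵥ (R *ᵥ w) := by rw [← mulVec_mulVec, hRsym]
      _ = (R *ᵥ w) ⬝ᵥ (R *ᵥ w) := dotTrans ..
  -- invertibility of P
  have hPker : ∀ x : Fin m → ℝ, P *ᵥ x = 0 → x = 0 := by
    intro x hx
    have hq : x ⬝ᵥ P *ᵥ x = (R *ᵥ (gradh *ᵥ x)) ⬝ᵥ (R *ᵥ (gradh *ᵥ x))
        + (H *ᵥ x) ⬝ᵥ (H *ᵥ x) := by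
      rw [hP, add_mulVec, dotProduct_add]
      congr 1
      · calc x ⬝ᵥ (gradhᵀ * R * gradh) *ᵥ x
            = x ⬝ᵥ gradhᵀ *ᵥ (R *ᵥ (gradh *ᵥ x)) := by
              rw [Matrix.mul_assoc, ← mulVec_mulVec, ← mulVec_mulVec]
          _ = (gradh *ᵥ x) ⬝ᵥ R *ᵥ (gradh *ᵥ x) := dotTrans ..
          _ = _ := hRself _
      · rw [← mulVec_mulVec]
        nth_rewrite 1 [← hHsym]
        rw [dotTrans]
    have h0 : x ⬝ᵥ P *ᵥ x = 0 := by rw [hx, dotProduct_zero]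
    have h1 : R *ᵥ (gradh *ᵥ x) = 0 := by
      refine dotProduct_self_eq_zero.mp ?_
      have := dot_self_nonneg (R *ᵥ (gradh *ᵥ x))
      have := dot_self_nonneg (H *ᵥ x)
      linarith [hq.symm.trans h0]
    have h2 : gradh *ᵥ x = (gradg * (gradgᵀ * gradg)⁻¹ * gradgᵀ) *ᵥ (gradh *ᵥ x) := by
      rw [hR, Matrix.sub_mulVec, one_mulVec] at h1
      exact sub_eq_zero.mp h1
    refine (hli x (-((gradgᵀ * gradg)⁻¹ *ᵥ (gradgᵀ *ᵥ (gradh *ᵥ x)))) ?_).1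
    rw [mulVec_neg, mulVec_mulVec, mulVec_mulVec, ← h2, add_neg_cancel]
  have hPu : IsUnit P := by
    rw [← Matrix.mulVec_injective_iff_isUnit]
    intro x y hxy
    have h0 : P *ᵥ (x - y) = 0 := by rw [mulVec_sub, hxy, sub_self]
    exact sub_eq_zero.mp (hPker _ h0)
  have hPdet : IsUnit P.det := (Matrix.isUnit_iff_isUnit_det _).mp hPu
  have hPi1 : P * P⁻¹ = 1 := Matrix.mul_nonsing_inv _ hPdet
  -- abbreviations (opaque)
  obtain ⟨u, hu⟩ : ∃ u, u = F + gradh *ᵥ lam := ⟨_, rfl⟩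
  obtain ⟨t, ht⟩ : ∃ t, t = gradhᵀ *ᵥ (R *ᵥ F) := ⟨_, rfl⟩
  obtain ⟨s, hs⟩ : ∃ s, s = P⁻¹ *ᵥ t := ⟨_, rfl⟩
  rw [← hu] at hk
  rw [← hu, ← ht, ← hs]
  -- key vector identities
  have hGk : (gradgᵀ * gradg) *ᵥ k = gradgᵀ *ᵥ u := by
    rw [hk, mulVec_mulVec, hGi1, one_mulVec]
  have hBk : gradg *ᵥ k = u - R *ᵥ u := by
    have h3 : gradg * (gradgᵀ * gradg)⁻¹ * gradgᵀ = 1 - R := by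
      rw [hR]; exact (sub_sub_cancel 1 _).symm
    rw [hk, mulVec_mulVec, mulVec_mulVec, h3, Matrix.sub_mulVec, one_mulVec]
  have hPs : P *ᵥ s = t := by rw [hs, mulVec_mulVec, hPi1, one_mulVec]
  have eRlam : ∀ w : Fin n → ℝ, (gradh *ᵥ lam) ⬝ᵥ R *ᵥ w = lam ⬝ᵥ gradhᵀ *ᵥ (R *ᵥ w) := by
    intro w; rw [dotTrans]
  -- atomic scalar facts
  have e1 : ν ⬝ᵥ (gradgᵀ * gradg) *ᵥ ν = (gradg *ᵥ ν) ⬝ᵥ (gradg *ᵥ ν) := by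
    rw [← mulVec_mulVec, dotTrans]
  have e2 : ν ⬝ᵥ (gradgᵀ * gradg) *ᵥ k = (gradg *ᵥ ν) ⬝ᵥ u := by
    rw [hGk, dotTrans]
  have e2' : k ⬝ᵥ (gradgᵀ * gradg) *ᵥ ν = (gradg *ᵥ ν) ⬝ᵥ u := by
    rw [dotSymmBilin hGsym, e2]
  have e3 : k ⬝ᵥ (gradgᵀ * gradg) *ᵥ k = u ⬝ᵥ u - (R *ᵥ u) ⬝ᵥ u := by
    rw [hGk, dotTrans, hBk, sub_dotProduct]
  have e4 : (R *ᵥ u) ⬝ᵥ u = F ⬝ᵥ R *ᵥ F + 2 * (lam ⬝ᵥ t)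
      + lam ⬝ᵥ gradhᵀ *ᵥ (R *ᵥ (gradh *ᵥ lam)) := by
    rw [dotProduct_comm, hu, mulVec_add, dotProduct_add, add_dotProduct, add_dotProduct]
    rw [dotSymmBilin hRsym F (gradh *ᵥ lam)]
    rw [eRlam, eRlam, ← ht]
    ring
  have e5 : lam ⬝ᵥ P *ᵥ lam = lam ⬝ᵥ gradhᵀ *ᵥ (R *ᵥ (gradh *ᵥ lam))
      + (H *ᵥ lam) ⬝ᵥ (H *ᵥ lam) := by
    rw [hP, add_mulVec, dotProduct_add]
    congr 1
    · rw [Matrix.mul_assoc, ← mulVec_mulVec, ← mulVec_mulVec]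
    · rw [← mulVec_mulVec]
      nth_rewrite 1 [← hHsym]
      rw [dotTrans]
  have e6 : lam ⬝ᵥ P *ᵥ s = lam ⬝ᵥ t := by rw [hPs]
  have e6' : s ⬝ᵥ P *ᵥ lam = lam ⬝ᵥ t := by rw [dotSymmBilin hPsym, e6]
  have e7 : s ⬝ᵥ P *ᵥ s = s ⬝ᵥ t := by rw [hPs]
  have e8 : F ⬝ᵥ Q *ᵥ F = F ⬝ᵥ R *ᵥ F - s ⬝ᵥ t := by
    have h9 : (R * gradh * P⁻¹ * gradhᵀ * R) *ᵥ F = R *ᵥ (gradh *ᵥ s) := by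
      rw [hs, ht, mulVec_mulVec, mulVec_mulVec, mulVec_mulVec, mulVec_mulVec]
    rw [hQ, Matrix.sub_mulVec, dotProduct_sub, h9,
      dotSymmBilin hRsym F (gradh *ᵥ s), ← dotTrans gradh s (R *ᵥ F), ← ht]
  -- expand the goal
  rw [euclNorm_sq, euclNorm_sq, expand_sq]
  have expandG : (ν + k) ⬝ᵥ (gradgᵀ * gradg) *ᵥ (ν + k)
      = ν ⬝ᵥ (gradgᵀ * gradg) *ᵥ ν + ν ⬝ᵥ (gradgᵀ * gradg) *ᵥ k
        + k ⬝ᵥ (gradgᵀ * gradg) *ᵥ ν + k ⬝ᵥ (gradgᵀ * gradg) *ᵥ k := by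
    rw [mulVec_add, dotProduct_add, add_dotProduct, add_dotProduct]; ring
  have expandP : (lam + s) ⬝ᵥ P *ᵥ (lam + s)
      = lam ⬝ᵥ P *ᵥ lam + lam ⬝ᵥ P *ᵥ s + s ⬝ᵥ P *ᵥ lam + s ⬝ᵥ P *ᵥ s := by
    rw [mulVec_add, dotProduct_add, add_dotProduct, add_dotProduct]; ring
  rw [expandG, expandP, e1, e2, e2', e3, e4, e5, e6, e6', e7, e8]
  ring
end

section
/- Let f : ℝ^d → ℝ be a convex function that is C-Lipschitz with respect to the Euclidean norm (C ≥ 0), let Θ ⊆ ℝ^d be a nonempty closed convex set, let μ > 0, let θ₀ ∈ ℝ^d, and let θ* ∈ Θ. Suppose θ̃ ∈ ℝ^d minimizes the map θ ↦ (1/2)‖θ − θ₀‖₂² + μ·f(θ) over ℝ^d, and θ₊ is the Euclidean projection of θ̃ onto Θ (i.e., θ₊ ∈ Θ and ‖θ₊ − θ̃‖₂ ≤ ‖θ − θ̃‖₂ for all θ ∈ Θ). Then μ·(f(θ₀) − f(θ*)) ≤ C²μ²/2 + (1/2)‖θ₀ − θ*‖₂² − (1/2)‖θ₊ − θ*‖₂².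 -/
set_option maxHeartbeats 1000000

open RealInnerProductSpace

theorem stmt16 {d : ℕ} (f : EuclideanSpace ℝ (Fin d) → ℝ) (C : ℝ) (hC : 0 ≤ C)
    (hconv : ConvexOn ℝ Set.univ f)
    (hlip : ∀ x y : EuclideanSpace ℝ (Fin d), |f x - f y| ≤ C * ‖x - y‖)
    (Θ : Set (EuclideanSpace ℝ (Fin d))) (hne : Θ.Nonempty) (hcl : IsClosed Θ)
    (hcv : Convex ℝ Θ)
    (μ : ℝ) (hμ : 0 < μ) (θ₀ : EuclideanSpace ℝ (Fin d))
    (θstar : EuclideanSpace ℝ (Fin d)) (hθstar : θstar ∈ Θ)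
    (θtilde : EuclideanSpace ℝ (Fin d))
    (hθtilde : ∀ θ : EuclideanSpace ℝ (Fin d),
      (1 / 2) * ‖θtilde - θ₀‖ ^ 2 + μ * f θtilde ≤ (1 / 2) * ‖θ - θ₀‖ ^ 2 + μ * f θ)
    (θplus : EuclideanSpace ℝ (Fin d)) (hθplusΘ : θplus ∈ Θ)
    (hθplus : ∀ θ ∈ Θ, ‖θplus - θtilde‖ ≤ ‖θ - θtilde‖) :
    μ * (f θ₀ - f θstar) ≤
      C ^ 2 * μ ^ 2 / 2 + (1 / 2) * ‖θ₀ - θstar‖ ^ 2 - (1 / 2) * ‖θplus - θstar‖ ^ 2 := by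
  -- Step 1: variational inequality for the projection
  have hproj : ∀ θ ∈ Θ, ⟪θtilde - θplus, θ - θplus⟫ ≤ 0 := by
    haveI : Nonempty ↑Θ := ⟨⟨θplus, hθplusΘ⟩⟩
    have heq : ‖θtilde - θplus‖ = ⨅ w : Θ, ‖θtilde - w‖ := by
      apply le_antisymm
      · apply le_ciInf
        intro w
        rw [norm_sub_rev, norm_sub_rev θtilde]
        exact hθplus w w.2
      · have hbdd : BddBelow (Set.range fun w : Θ => ‖θtilde - (w : EuclideanSpace ℝ (Fin d))‖) := by
          refine ⟨0, ?_⟩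
          rintro x ⟨w, rfl⟩
          exact norm_nonneg _
        exact ciInf_le hbdd ⟨θplus, hθplusΘ⟩
    exact (norm_eq_iInf_iff_real_inner_le_zero hcv hθplusΘ).1 heq
  -- Step 2: strong convexity inequality for the prox
  have key : ∀ θ : EuclideanSpace ℝ (Fin d),
      (1 / 2) * ‖θtilde - θ₀‖ ^ 2 + μ * f θtilde + (1 / 2) * ‖θ - θtilde‖ ^ 2
        ≤ (1 / 2) * ‖θ - θ₀‖ ^ 2 + μ * f θ := by
    intro θ
    set a := θtilde - θ₀ with ha
    set b := θ - θtilde with hb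
    have hstep : ∀ t : ℝ, 0 < t → t ≤ 1 →
        0 ≤ ⟪a, b⟫ + (t / 2) * ‖b‖ ^ 2 + μ * (f θ - f θtilde) := by
      intro t ht0 ht1
      have hpt : (1 - t) • θtilde + t • θ = θtilde + t • b := by
        rw [hb, smul_sub, sub_smul, one_smul]; abel
      have hcv' : f ((1 - t) • θtilde + t • θ) ≤ (1 - t) * f θtilde + t * f θ := by
        have := hconv.2 (Set.mem_univ θtilde) (Set.mem_univ θ)
          (by linarith : (0:ℝ) ≤ 1 - t) (le_of_lt ht0) (by ring)
        simpa [smul_eq_mul] using this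
      have hnorm : ‖θtilde + t • b - θ₀‖ ^ 2
          = ‖a‖ ^ 2 + 2 * t * ⟪a, b⟫ + t ^ 2 * ‖b‖ ^ 2 := by
        have : θtilde + t • b - θ₀ = a + t • b := by rw [ha]; abel
        rw [this, norm_add_sq_real, real_inner_smul_right, norm_smul]
        simp [abs_of_pos ht0]
        ring
      have h1 := hθtilde (θtilde + t • b)
      rw [hnorm, ← hpt] at h1
      have h1' : (1/2) * ‖a‖ ^ 2 + μ * f θtilde
          ≤ (1/2) * (‖a‖ ^ 2 + 2 * t * ⟪a, b⟫ + t ^ 2 * ‖b‖ ^ 2)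
            + μ * ((1 - t) * f θtilde + t * f θ) :=
        le_trans h1 (by nlinarith [hcv', hμ])
      have h2 : 0 ≤ t * (⟪a, b⟫ + (t / 2) * ‖b‖ ^ 2 + μ * (f θ - f θtilde)) := by
        nlinarith [h1']
      nlinarith [h2, ht0]
    have h0 : 0 ≤ ⟪a, b⟫ + μ * (f θ - f θtilde) := by
      by_contra h
      push_neg at h
      set P := ⟪a, b⟫ + μ * (f θ - f θtilde) with hP
      set B := ‖b‖ ^ 2 with hB
      have hBnn : 0 ≤ B := by positivity
      rcases eq_or_lt_of_le hBnn with hB0 | hBpos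
      · have := hstep 1 one_pos le_rfl
        nlinarith
      · have ht0 : 0 < min 1 (-P / B) := by
          apply lt_min one_pos
          apply div_pos (by linarith) hBpos
        have ht1 : min 1 (-P / B) ≤ 1 := min_le_left _ _
        have := hstep _ ht0 ht1
        have hle : (min 1 (-P / B)) * B ≤ (-P / B) * B :=
          mul_le_mul_of_nonneg_right (min_le_right _ _) hBnn
        rw [div_mul_cancel₀ _ (ne_of_gt hBpos)] at hle
        nlinarith
    have hexp : ‖θ - θ₀‖ ^ 2 = ‖a‖ ^ 2 + 2 * ⟪a, b⟫ + ‖b‖ ^ 2 := by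
      have : θ - θ₀ = a + b := by rw [ha, hb]; abel
      rw [this, norm_add_sq_real]
    rw [hexp]
    nlinarith [h0, hμ]
  -- Step 3: nonexpansiveness consequence
  have hne2 : ‖θplus - θstar‖ ^ 2 ≤ ‖θstar - θtilde‖ ^ 2 := by
    have h1 := hproj θstar hθstar
    have hexp : ‖θstar - θtilde‖ ^ 2
        = ‖θtilde - θplus‖ ^ 2 - 2 * ⟪θtilde - θplus, θstar - θplus⟫
          + ‖θstar - θplus‖ ^ 2 := by
      have h2 : θstar - θtilde = -((θtilde - θplus) - (θstar - θplus)) := by abel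
      rw [h2, norm_neg]
      exact norm_sub_sq_real _ _
    have hrev : ‖θplus - θstar‖ = ‖θstar - θplus‖ := norm_sub_rev _ _
    have hrev2 : ‖θplus - θstar‖ ^ 2 = ‖θstar - θplus‖ ^ 2 := by rw [hrev]
    nlinarith [sq_nonneg ‖θtilde - θplus‖]
  -- Step 4: Lipschitz bound
  have hlipb : μ * (f θ₀ - f θtilde) ≤ (1/2) * ‖θ₀ - θtilde‖ ^ 2 + C ^ 2 * μ ^ 2 / 2 := by
    have h1 : f θ₀ - f θtilde ≤ C * ‖θ₀ - θtilde‖ :=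
      le_trans (le_abs_self _) (hlip θ₀ θtilde)
    nlinarith [sq_nonneg (C * μ - ‖θ₀ - θtilde‖), norm_nonneg (θ₀ - θtilde), hμ]
  -- Combine
  have hk := key θstar
  have e1 : ‖θ₀ - θtilde‖ ^ 2 = ‖θtilde - θ₀‖ ^ 2 := by rw [norm_sub_rev]
  have e2 : ‖θstar - θ₀‖ ^ 2 = ‖θ₀ - θstar‖ ^ 2 := by rw [norm_sub_rev]
  linarith [hk, hlipb, hne2]
end

section
/- Let Θ ⊆ ℝ^d be a nonempty closed convex set with ‖θ‖₂ ≤ B₁ for all θ ∈ Θ, where B₁ > 0. Let K ≥ 1 be a natural number and for each k ∈ {1, …, K} let l_k : ℝ^d → ℝ be a convex C-Lipschitz function (C ≥ 0). Let μ₁ > 0 and set μ_k := μ₁/√k. Let θ¹ ∈ Θ, and for k = 1, …, K define θ̃^{k+1} to be a minimizer over ℝ^d of θ ↦ (1/2)‖θ − θ^k‖₂² + μ_k·l_k(θ), and θ^{k+1} to be the Euclidean projection of θ̃^{k+1} onto Θ. Then for every θ* ∈ Θ: ∑_{k=1}^{K} l_k(θ^k) − ∑_{k=1}^{K} l_k(θ*)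 ≤ (2B₁²/μ₁ + μ₁C²)·√K. In particular, the regret of this online algorithm is O(√K). -/
set_option maxHeartbeats 800000

lemma aux_pos (A B : ℝ) (hB : 0 ≤ B) (h : ∀ t : ℝ, 0 < t → t ≤ 1 → 0 ≤ A + t * B) :
    0 ≤ A := by
  by_contra h'
  push_neg at h'
  rcases eq_or_lt_of_le hB with hB0 | hB0
  · have := h 1 one_pos le_rfl; nlinarith
  · have h1 : 0 < min 1 (-A / (2 * B)) := lt_min one_pos (div_pos (by linarith) (by linarith))
    have h2 : min 1 (-A / (2 * B)) ≤ 1 := min_le_left _ _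
    have h3 : min 1 (-A / (2 * B)) ≤ -A / (2 * B) := min_le_right _ _
    have h4 : -A / (2 * B) * B = -A / 2 := by field_simp
    have h5 := h _ h1 h2
    nlinarith [mul_le_mul_of_nonneg_right h3 hB0.le]

lemma aux_tel (η a : ℕ → ℝ) (M : ℝ)
    (hη : ∀ k, 0 ≤ η k) (hmono : ∀ k, η k ≤ η (k + 1))
    (ha0 : ∀ k, 0 ≤ a k) (haM : ∀ k, a k ≤ M) :
    ∀ K, 1 ≤ K → ∑ k ∈ Finset.Icc 1 K, η k * (a k - a (k + 1)) ≤ M * η K - η K * a (K + 1) := by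
  refine Nat.le_induction ?_ ?_
  · simp only [Finset.Icc_self, Finset.sum_singleton]
    nlinarith [hη 1, ha0 2, haM 1]
  · intro n hn ih
    rw [Finset.sum_Icc_succ_top (by omega : 1 ≤ n + 1)]
    nlinarith [hη n, hη (n+1), ha0 (n+1), ha0 (n+2), haM (n+1), hmono n,
      mul_le_mul_of_nonneg_left (haM (n+1)) (sub_nonneg.2 (hmono n))]

lemma aux_sqrt : ∀ K : ℕ, 1 ≤ K → ∑ k ∈ Finset.Icc 1 K, (1 / Real.sqrt k) ≤ 2 * Real.sqrt K := by
  refine Nat.le_induction ?_ ?_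
  · simp [Real.sqrt_one]
  · intro n hn ih
    rw [Finset.sum_Icc_succ_top (by omega : 1 ≤ n + 1)]
    have h2 : (0:ℝ) < Real.sqrt ((n:ℕ) + 1 : ℕ) := Real.sqrt_pos.2 (by positivity)
    have h3 : Real.sqrt n ^ 2 = n := Real.sq_sqrt (by positivity)
    have h4 : Real.sqrt ((n + 1 : ℕ)) ^ 2 = (n:ℝ) + 1 := by
      rw [Real.sq_sqrt (by positivity)]; push_cast; ring
    have h5 : 1 / Real.sqrt ((n + 1 : ℕ)) ≤ 2 * Real.sqrt ((n+1:ℕ)) - 2 * Real.sqrt (n:ℕ) := by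
      rw [div_le_iff₀ h2]
      nlinarith [sq_nonneg (Real.sqrt ((n+1:ℕ)) - Real.sqrt (n:ℕ))]
    push_cast at *
    linarith

theorem stmt18 {d : ℕ} (Θ : Set (EuclideanSpace ℝ (Fin d))) (hne : Θ.Nonempty)
    (hcl : IsClosed Θ) (hcv : Convex ℝ Θ)
    (B₁ : ℝ) (hB₁ : 0 < B₁) (hbound : ∀ θ ∈ Θ, ‖θ‖ ≤ B₁)
    (K : ℕ) (hK : 1 ≤ K)
    (l : ℕ → EuclideanSpace ℝ (Fin d) → ℝ) (C : ℝ) (hC : 0 ≤ C)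
    (hconv : ∀ k : ℕ, 1 ≤ k → k ≤ K → ConvexOn ℝ Set.univ (l k))
    (hlip : ∀ k : ℕ, 1 ≤ k → k ≤ K →
      ∀ x y : EuclideanSpace ℝ (Fin d), |l k x - l k y| ≤ C * ‖x - y‖)
    (μ₁ : ℝ) (hμ₁ : 0 < μ₁)
    (θ θtilde : ℕ → EuclideanSpace ℝ (Fin d))
    (hθ1 : θ 1 ∈ Θ)
    (hmin : ∀ k : ℕ, 1 ≤ k → k ≤ K → ∀ y : EuclideanSpace ℝ (Fin d),
      (1 / 2) * ‖θtilde (k + 1) - θ k‖ ^ 2 + (μ₁ / Real.sqrt k) * l k (θtilde (k + 1)) ≤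
        (1 / 2) * ‖y - θ k‖ ^ 2 + (μ₁ / Real.sqrt k) * l k y)
    (hprojmem : ∀ k : ℕ, 1 ≤ k → k ≤ K → θ (k + 1) ∈ Θ)
    (hproj : ∀ k : ℕ, 1 ≤ k → k ≤ K → ∀ y ∈ Θ,
      ‖θ (k + 1) - θtilde (k + 1)‖ ≤ ‖y - θtilde (k + 1)‖)
    (θstar : EuclideanSpace ℝ (Fin d)) (hθstar : θstar ∈ Θ) :
    ∑ k ∈ Finset.Icc 1 K, l k (θ k) - ∑ k ∈ Finset.Icc 1 K, l k θstar ≤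
      (2 * B₁ ^ 2 / μ₁ + μ₁ * C ^ 2) * Real.sqrt K := by
  -- membership of all iterates
  have hmem : ∀ j : ℕ, 1 ≤ j → j ≤ K + 1 → θ j ∈ Θ := by
    intro j hj1 hj2
    rcases Nat.exists_eq_add_of_le hj1 with ⟨m, rfl⟩
    rcases Nat.eq_zero_or_pos m with rfl | hm
    · exact hθ1
    · have : 1 + m = (m - 1 + 1) + 1 := by omega
      rw [this]
      exact hprojmem (m - 1 + 1) (by omega) (by omega)
  have hbnd : ∀ j : ℕ, 1 ≤ j → j ≤ K + 1 → ‖θ j - θstar‖ ^ 2 ≤ 4 * B₁ ^ 2 := by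
    intro j hj1 hj2
    have h1 : ‖θ j - θstar‖ ≤ 2 * B₁ := by
      calc ‖θ j - θstar‖ ≤ ‖θ j‖ + ‖θstar‖ := norm_sub_le _ _
        _ ≤ 2 * B₁ := by
          have := hbound _ (hmem j hj1 hj2); have := hbound _ hθstar; linarith
    nlinarith [norm_nonneg (θ j - θstar)]
  -- the per-step key inequality
  have key : ∀ k ∈ Finset.Icc 1 K,
      l k (θ k) - l k θstar ≤
        (Real.sqrt k / (2 * μ₁)) * (‖θ k - θstar‖ ^ 2 - ‖θ (k + 1) - θstar‖ ^ 2)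
          + (μ₁ * C ^ 2 / 2) * (1 / Real.sqrt k) := by
    intro k hk
    rw [Finset.mem_Icc] at hk
    obtain ⟨hk1, hk2⟩ := hk
    set x := θ k with hxdef
    set q := θtilde (k + 1) with hqdef
    set p := θ (k + 1) with hpdef
    set s := θstar with hsdef
    have hsq : (0:ℝ) < Real.sqrt k := Real.sqrt_pos.2 (by exact_mod_cast Nat.pos_of_ne_zero (by omega))
    set μ := μ₁ / Real.sqrt k with hμdef
    have hμpos : 0 < μ := div_pos hμ₁ hsq
    -- variational inequality for the prox step
    have hVI1 : 0 ≤ (inner ℝ (q - x) (s - q) : ℝ) + μ * (l k s - l k q) := by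
      apply aux_pos _ (‖s - q‖ ^ 2 / 2) (by positivity)
      intro t ht0 ht1
      have hmin' := hmin k hk1 hk2 ((1 - t) • q + t • s)
      have hconv' := (hconv k hk1 hk2).2 (Set.mem_univ q) (Set.mem_univ s)
        (by linarith : (0:ℝ) ≤ 1 - t) ht0.le (by ring)
      have hmul : μ * l k ((1 - t) • q + t • s) ≤ μ * ((1 - t) * l k q + t * l k s) :=
        mul_le_mul_of_nonneg_left hconv' hμpos.le
      have hz : (1 - t) • q + t • s - x = (q - x) + t • (s - q) := by module
      have hnorm : ‖(1 - t) • q + t • s - x‖ ^ 2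
          = ‖q - x‖ ^ 2 + 2 * (t * (inner ℝ (q - x) (s - q) : ℝ)) + t ^ 2 * ‖s - q‖ ^ 2 := by
        rw [hz, norm_add_sq_real, real_inner_smul_right, norm_smul, Real.norm_eq_abs, mul_pow,
          sq_abs]
      have hstep : 0 ≤ t * (((inner ℝ (q - x) (s - q) : ℝ) + μ * (l k s - l k q))
          + t * (‖s - q‖ ^ 2 / 2)) := by linarith [hmin', hmul, hnorm]
      have := le_of_mul_le_mul_left (by linarith : t * 0 ≤ t * (((inner ℝ (q - x) (s - q) : ℝ)
        + μ * (l k s - l k q)) + t * (‖s - q‖ ^ 2 / 2))) ht0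
      linarith
    -- variational inequality for the projection
    have hVI2 : 0 ≤ (inner ℝ (p - q) (s - p) : ℝ) := by
      apply aux_pos _ (‖s - p‖ ^ 2 / 2) (by positivity)
      intro t ht0 ht1
      have hmemt : (1 - t) • p + t • s ∈ Θ :=
        hcv (hprojmem k hk1 hk2) hθstar (by linarith) ht0.le (by ring)
      have hproj' := hproj k hk1 hk2 _ hmemt
      have hsq' : ‖p - q‖ ^ 2 ≤ ‖(1 - t) • p + t • s - q‖ ^ 2 :=
        pow_le_pow_left₀ (norm_nonneg _) hproj' 2
      have hz : (1 - t) • p + t • s - q = (p - q) + t • (s - p) := by module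
      have hnorm : ‖(1 - t) • p + t • s - q‖ ^ 2
          = ‖p - q‖ ^ 2 + 2 * (t * (inner ℝ (p - q) (s - p) : ℝ)) + t ^ 2 * ‖s - p‖ ^ 2 := by
        rw [hz, norm_add_sq_real, real_inner_smul_right, norm_smul, Real.norm_eq_abs, mul_pow,
          sq_abs]
      have hstep : 0 ≤ t * (((inner ℝ (p - q) (s - p) : ℝ)) + t * (‖s - p‖ ^ 2 / 2)) := by
        linarith [hsq', hnorm]
      have := le_of_mul_le_mul_left (by linarith : t * 0 ≤ t * (((inner ℝ (p - q) (s - p) : ℝ))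
        + t * (‖s - p‖ ^ 2 / 2))) ht0
      linarith
    -- projection decreases distance to s
    have hdist : ‖p - s‖ ^ 2 ≤ ‖s - q‖ ^ 2 := by
      have h1 : s - q = (s - p) + (p - q) := by module
      have h2 : (inner ℝ (s - p) (p - q) : ℝ) = (inner ℝ (p - q) (s - p) : ℝ) := real_inner_comm _ _
      have h3 : ‖p - s‖ = ‖s - p‖ := norm_sub_rev _ _
      rw [h1, norm_add_sq_real, h3]
      nlinarith [hVI2, sq_nonneg ‖p - q‖]
    -- expand the square
    have hexp : ‖s - x‖ ^ 2 = ‖q - x‖ ^ 2 + 2 * (inner ℝ (q - x) (s - q) : ℝ) + ‖s - q‖ ^ 2 := by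
      have h1 : s - x = (q - x) + (s - q) := by module
      rw [h1, norm_add_sq_real]
    have hLip : l k x - l k q ≤ C * ‖q - x‖ := by
      have := le_trans (le_abs_self _) (hlip k hk1 hk2 x q)
      rwa [norm_sub_rev] at this
    have e1 : ‖x - s‖ = ‖s - x‖ := norm_sub_rev _ _
    have hcomb : μ * (l k x - l k s) ≤ μ ^ 2 * C ^ 2 / 2 + (‖x - s‖ ^ 2 - ‖p - s‖ ^ 2) / 2 := by
      have hamgm : μ * C * ‖q - x‖ ≤ μ ^ 2 * C ^ 2 / 2 + ‖q - x‖ ^ 2 / 2 := by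
        nlinarith [sq_nonneg (μ * C - ‖q - x‖)]
      have hl := mul_le_mul_of_nonneg_left hLip hμpos.le
      have e2 : ‖x - s‖ ^ 2 = ‖s - x‖ ^ 2 := by rw [e1]
      nlinarith [hVI1, hexp, hdist]
    -- divide by μ
    have hfin : l k x - l k s ≤ μ * C ^ 2 / 2
        + (1 / (2 * μ)) * (‖x - s‖ ^ 2 - ‖p - s‖ ^ 2) := by
      rw [← mul_le_mul_iff_right₀ hμpos]
      have hexpand : μ * (μ * C ^ 2 / 2 + (1 / (2 * μ)) * (‖x - s‖ ^ 2 - ‖p - s‖ ^ 2))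
          = μ ^ 2 * C ^ 2 / 2 + (‖x - s‖ ^ 2 - ‖p - s‖ ^ 2) / 2 := by
        field_simp
      rw [hexpand]; exact hcomb
    have e3 : μ * C ^ 2 / 2 = (μ₁ * C ^ 2 / 2) * (1 / Real.sqrt k) := by
      rw [hμdef]; ring
    have e4 : (1 / (2 * μ)) * (‖x - s‖ ^ 2 - ‖p - s‖ ^ 2)
        = (Real.sqrt k / (2 * μ₁)) * (‖x - s‖ ^ 2 - ‖p - s‖ ^ 2) := by
      rw [hμdef]; field_simp
    rw [e3, e4] at hfin
    linarith
  -- now sum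
  set a : ℕ → ℝ := fun j => min (‖θ j - θstar‖ ^ 2) (4 * B₁ ^ 2) with hadef
  have haeq : ∀ j : ℕ, 1 ≤ j → j ≤ K + 1 → a j = ‖θ j - θstar‖ ^ 2 := by
    intro j hj1 hj2
    exact min_eq_left (hbnd j hj1 hj2)
  have h2 : ∑ k ∈ Finset.Icc 1 K, (l k (θ k) - l k θstar) ≤
      ∑ k ∈ Finset.Icc 1 K, ((Real.sqrt k / (2 * μ₁)) * (a k - a (k + 1))
        + (μ₁ * C ^ 2 / 2) * (1 / Real.sqrt k)) := by
    apply Finset.sum_le_sum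
    intro k hk
    have hk' := Finset.mem_Icc.mp hk
    rw [haeq k (by omega) (by omega), haeq (k + 1) (by omega) (by omega)]
    exact key k hk
  have hT := aux_tel (fun j => Real.sqrt j / (2 * μ₁)) a (4 * B₁ ^ 2)
    (fun j => by positivity)
    (fun j => by
      have h : Real.sqrt (j:ℕ) ≤ Real.sqrt ((j+1:ℕ)) :=
        Real.sqrt_le_sqrt (by push_cast; linarith)
      exact (div_le_div_iff_of_pos_right (by positivity)).mpr h)
    (fun j => le_min (by positivity) (by positivity))
    (fun j => min_le_right _ _) K hK
  have hS := aux_sqrt K hK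
  have hsqK : (0:ℝ) ≤ Real.sqrt K := Real.sqrt_nonneg _
  have ha0 : 0 ≤ a (K + 1) := le_min (by positivity) (by positivity)
  have hη0 : (0:ℝ) ≤ Real.sqrt K / (2 * μ₁) := by positivity
  rw [← Finset.sum_sub_distrib]
  calc ∑ k ∈ Finset.Icc 1 K, (l k (θ k) - l k θstar)
      ≤ ∑ k ∈ Finset.Icc 1 K, ((Real.sqrt k / (2 * μ₁)) * (a k - a (k + 1))
        + (μ₁ * C ^ 2 / 2) * (1 / Real.sqrt k)) := h2
    _ = (∑ k ∈ Finset.Icc 1 K, (Real.sqrt k / (2 * μ₁)) * (a k - a (k + 1)))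
        + (μ₁ * C ^ 2 / 2) * ∑ k ∈ Finset.Icc 1 K, (1 / Real.sqrt k) := by
        rw [Finset.sum_add_distrib, Finset.mul_sum]
    _ ≤ (4 * B₁ ^ 2) * (Real.sqrt K / (2 * μ₁)) + (μ₁ * C ^ 2 / 2) * (2 * Real.sqrt K) := by
        have := mul_le_mul_of_nonneg_left hS (by positivity : (0:ℝ) ≤ μ₁ * C ^ 2 / 2)
        nlinarith [mul_nonneg hη0 ha0]
    _ = (2 * B₁ ^ 2 / μ₁ + μ₁ * C ^ 2) * Real.sqrt K := by field_simp; ring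
end
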